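/- Let A(m,l) = l + l^{-1} - m^{-4} + m^{-2} + 2 + m^2 - m^4. For every nonzero β = (β₁, β₂) ∈ ℤ^2, the face polynomial A^β (the sum of monomials of A whose exponent vectors minimize β₁·deg_m + β₂·deg_l) is one of: l, l^{-1}, m^4 (up to sign), m^{-4} (up to sign), l − m^4, l − m^{-4}, l^{-1} − m^4, or l^{-1} − m^{-4} (each up to sign and possibly with additional monomials only when β is parallel to special directions), and in particular A^β has no critical zero in (ℂ*)^2, i.e., the system consisting of A^β alone never has a nonsimple zero pattern making (A, B)^β degenerate when paired with B^β ∈ {−x, m^p l^q, m^p l^q − x}. -/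

import Mathlib

open Finset

/-- Exponent set of the figure-eight A-polynomial
A(m,l) = l + l⁻¹ - m⁻⁴ + m⁻² + 2 + m² - m⁴. -/
def SA : Finset (ℤ × ℤ) :=
  {(0, 1), (0, -1), (-4, 0), (-2, 0), (0, 0), (2, 0), (4, 0)}

/-- Coefficients of the figure-eight A-polynomial. -/
def cA : ℤ × ℤ → ℂ := fun e =>
  if e = (0, 1) then 1 else if e = (0, -1) then 1 else
  if e = (-4, 0) then -1 else if e = (-2, 0) then 1 else
  if e = (0, 0) then 2 else if e = (2, 0) then 1 else -1

def pairing (β e : ℤ × ℤ) : ℤ := β.1 * e.1 + β.2 * e.2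

/-- The truncation A^β of A to the face of its Newton polygon minimizing ⟨·, β⟩. -/
noncomputable def faceA (β : ℤ × ℤ) (m l : ℂ) : ℂ :=
  ∑ e ∈ SA.filter (fun e => ∀ e' ∈ SA, pairing β e ≤ pairing β e'),
    cA e * m ^ e.1 * l ^ e.2

/-- Exponent set of B(m,l) = m^p l^q - x. -/
def SB (p q : ℤ) : Finset (ℤ × ℤ) := {(p, q), (0, 0)}

noncomputable def cB (p q : ℤ) (x : ℂ) : ℤ × ℤ → ℂ := fun e =>
  if e = (p, q) then 1 else -x

/-- The truncation B^β of B. -/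
noncomputable def faceB (p q : ℤ) (x : ℂ) (β : ℤ × ℤ) (m l : ℂ) : ℂ :=
  ∑ e ∈ (SB p q).filter (fun e => ∀ e' ∈ SB p q, pairing β e ≤ pairing β e'),
    cB p q x e * m ^ e.1 * l ^ e.2

/-- Jacobian of the truncated system (A^β, B^β). -/
noncomputable def jacFace (p q : ℤ) (x : ℂ) (β : ℤ × ℤ) (m l : ℂ) : ℂ :=
  deriv (fun m' => faceA β m' l) m * deriv (fun l' => faceB p q x β m l') l -
    deriv (fun l' => faceA β m l') l * deriv (fun m' => faceB p q x β m' l) m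

/-- If `e0` is the strict minimizer of `⟨·, β⟩` on `S`, the face filter is `{e0}`. -/
lemma filter_min_singleton (S : Finset (ℤ × ℤ)) (β e0 : ℤ × ℤ) (he0 : e0 ∈ S)
    (hmin : ∀ e' ∈ S, e' ≠ e0 → pairing β e0 < pairing β e') :
    S.filter (fun e => ∀ e' ∈ S, pairing β e ≤ pairing β e') = {e0} := by
  ext e
  simp only [Finset.mem_filter, Finset.mem_singleton]
  constructor
  · rintro ⟨heS, hP⟩
    by_contra hne
    exact absurd (hP e0 he0) (not_le.mpr (hmin e heS hne))
  · intro he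
    rw [he]
    refine ⟨he0, fun e' he' => ?_⟩
    by_cases h : e' = e0
    · rw [h]
    · exact le_of_lt (hmin e' he' h)

/-- If the face of A is a single monomial, then A^β has no zero on the torus. -/
lemma faceA_singleton_ne (β : ℤ × ℤ) (e0 : ℤ × ℤ) (he0 : e0 ∈ SA) (hc : cA e0 ≠ 0)
    (hmin : ∀ e' ∈ SA, e' ≠ e0 → pairing β e0 < pairing β e')
    (m l : ℂ) (hm : m ≠ 0) (hl : l ≠ 0) : faceA β m l ≠ 0 := by
  rw [faceA, filter_min_singleton SA β e0 he0 hmin, Finset.sum_singleton]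
  exact mul_ne_zero (mul_ne_zero hc (zpow_ne_zero _ hm)) (zpow_ne_zero _ hl)

/-- A^β can only vanish on the torus if β is one of the four edge normals. -/
lemma faceA_cases (b1 b2 : ℤ) (hco : IsCoprime b1 b2) (m l : ℂ) (hm : m ≠ 0) (hl : l ≠ 0)
    (h : faceA (b1, b2) m l = 0) :
    (b1, b2) = ((1 : ℤ), (4 : ℤ)) ∨ (b1, b2) = (-1, -4) ∨
      (b1, b2) = (1, -4) ∨ (b1, b2) = (-1, 4) := by
  have key : b2 = 4 * b1 ∨ b2 = -4 * b1 := by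
    rcases lt_trichotomy b2 (4 * b1) with h1 | h1 | h1
    · rcases lt_trichotomy b2 (-4 * b1) with h2 | h2 | h2
      · exact absurd h (faceA_singleton_ne (b1, b2) (0, 1) (by decide) (by norm_num [cA])
          (by intro e' he' hne; fin_cases he' <;> simp [pairing] at hne ⊢ <;> omega) m l hm hl)
      · right; omega
      · exact absurd h (faceA_singleton_ne (b1, b2) (-4, 0) (by decide) (by norm_num [cA])
          (by intro e' he' hne; fin_cases he' <;> simp [pairing] at hne ⊢ <;> omega) m l hm hl)
    · left; omega
    · rcases lt_trichotomy b2 (-4 * b1) with h2 | h2 | h2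
      · exact absurd h (faceA_singleton_ne (b1, b2) (4, 0) (by decide) (by norm_num [cA])
          (by intro e' he' hne; fin_cases he' <;> simp [pairing] at hne ⊢ <;> omega) m l hm hl)
      · right; omega
      · exact absurd h (faceA_singleton_ne (b1, b2) (0, -1) (by decide) (by norm_num [cA])
          (by intro e' he' hne; fin_cases he' <;> simp [pairing] at hne ⊢ <;> omega) m l hm hl)
  have hb1 : b1 = 1 ∨ b1 = -1 := by
    obtain ⟨a, b, hab⟩ := hco
    have hd : b1 ∣ 1 := by
      rcases key with hk | hk
      · exact ⟨a + b * 4, by rw [← hab, hk]; ring⟩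
      · exact ⟨a - b * 4, by rw [← hab, hk]; ring⟩
    exact Int.isUnit_iff.mp (isUnit_of_dvd_one hd)
  rcases hb1 with hb | hb <;> rcases key with hk | hk <;> simp [hb, hk]

/-- If B^β vanishes on the torus with x ≠ 0, then β ⊥ (p,q) and x = m^p l^q. -/
lemma faceB_zero (p q : ℤ) (hpq : IsCoprime p q) (x : ℂ) (hx : x ≠ 0) (β : ℤ × ℤ)
    (m l : ℂ) (hm : m ≠ 0) (hl : l ≠ 0) (h : faceB p q x β m l = 0) :
    pairing β (p, q) = 0 ∧ m ^ p * l ^ q = x := by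
  have hpq0 : (p, q) ≠ ((0 : ℤ), (0 : ℤ)) := by
    rintro he
    rw [Prod.mk.injEq] at he
    rw [he.1, he.2] at hpq
    exact (not_isCoprime_zero_zero hpq)
  rcases lt_trichotomy (pairing β (p, q)) 0 with h1 | h1 | h1
  · exfalso
    have hf : (SB p q).filter (fun e => ∀ e' ∈ SB p q, pairing β e ≤ pairing β e') = {(p, q)} := by
      apply filter_min_singleton _ _ _ (by simp [SB])
      intro e' he' hne
      simp only [SB, Finset.mem_insert, Finset.mem_singleton] at he'
      rcases he' with rfl | rfl
      · exact absurd rfl hne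
      · simpa [pairing] using h1
    rw [faceB, hf, Finset.sum_singleton] at h
    simp only [cB, if_pos rfl] at h
    exact (mul_ne_zero (mul_ne_zero one_ne_zero (zpow_ne_zero _ hm)) (zpow_ne_zero _ hl)) h
  · refine ⟨h1, ?_⟩
    have hf : (SB p q).filter (fun e => ∀ e' ∈ SB p q, pairing β e ≤ pairing β e') = SB p q := by
      apply Finset.filter_eq_self.mpr
      intro e he e' he'
      simp only [SB, Finset.mem_insert, Finset.mem_singleton] at he he'
      have hp0 : pairing β (0, 0) = 0 := by simp [pairing]
      rcases he with rfl | rfl <;> rcases he' with rfl | rfl <;> simp_all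
    rw [faceB, hf, SB, Finset.sum_insert (by simpa using hpq0), Finset.sum_singleton] at h
    simp only [cB, if_pos rfl, if_neg (Ne.symm hpq0), one_mul, zpow_zero, mul_one] at h
    simp only [if_true, eq_self_iff_true] at h
    linear_combination h
  · exfalso
    have hf : (SB p q).filter (fun e => ∀ e' ∈ SB p q, pairing β e ≤ pairing β e')
        = {((0 : ℤ), (0 : ℤ))} := by
      apply filter_min_singleton _ _ _ (by simp [SB])
      intro e' he' hne
      simp only [SB, Finset.mem_insert, Finset.mem_singleton] at he'
      rcases he' with rfl | rfl
      · simpa [pairing] using h1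
      · exact absurd rfl hne
    rw [faceB, hf, Finset.sum_singleton] at h
    simp only [cB, if_neg (Ne.symm hpq0), zpow_zero, mul_one] at h
    exact hx (by linear_combination -h)

/-- Endgame: on the face curve l = m^c with p + cq = 0, m^p l^q = 1. -/
lemma face_endgame (m l x : ℂ) (hm : m ≠ 0) (p q c : ℤ)
    (hp : p + c * q = 0) (hml : l = m ^ c) (hxval : m ^ p * l ^ q = x) : x = 1 := by
  rw [← hxval, hml, ← zpow_mul, ← zpow_add₀ hm, hp, zpow_zero]

theorem fig8_face_systems_generically_nondegenerate
    (p q : ℤ) (hpq : IsCoprime p q) :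
    {x : ℂ | x ≠ 0 ∧ ∃ β : ℤ × ℤ, β ≠ 0 ∧ IsCoprime β.1 β.2 ∧
      ∃ m l : ℂ, m ≠ 0 ∧ l ≠ 0 ∧
        faceA β m l = 0 ∧ faceB p q x β m l = 0 ∧
        jacFace p q x β m l = 0}.Finite := by
  apply Set.Finite.subset (Set.finite_singleton (1 : ℂ))
  rintro x ⟨hx, ⟨b1, b2⟩, hβ, hco, m, l, hm, hl, hA, hB, -⟩
  simp only [Set.mem_singleton_iff]
  obtain ⟨hperp, hxval⟩ := faceB_zero p q hpq x hx (b1, b2) m l hm hl hB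
  rcases faceA_cases b1 b2 hco m l hm hl hA with h | h | h | h <;>
    (injection h with h1 h2; subst h1; subst h2; simp only [pairing] at hperp)
  · -- β = (1,4) : face l⁻¹ - m⁻⁴, curve l = m^4
    rw [faceA, show SA.filter (fun e => ∀ e' ∈ SA, pairing (1, 4) e ≤ pairing (1, 4) e')
          = {((0 : ℤ), (-1 : ℤ)), ((-4 : ℤ), (0 : ℤ))} from by decide,
        Finset.sum_pair (by decide)] at hA
    norm_num [cA] at hA
    have h2 : l⁻¹ = (m ^ (4 : ℤ))⁻¹ := by simp only [zpow_ofNat]; linear_combination hA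
    exact face_endgame m l x hm p q 4 (by omega) (inv_injective h2) hxval
  · -- β = (-1,-4) : face l - m⁴, curve l = m^4
    rw [faceA, show SA.filter (fun e => ∀ e' ∈ SA, pairing (-1, -4) e ≤ pairing (-1, -4) e')
          = {((0 : ℤ), (1 : ℤ)), ((4 : ℤ), (0 : ℤ))} from by decide,
        Finset.sum_pair (by decide)] at hA
    norm_num [cA] at hA
    have h2 : l = m ^ (4 : ℤ) := by simp only [zpow_ofNat]; linear_combination hA
    exact face_endgame m l x hm p q 4 (by omega) h2 hxval
  · -- β = (1,-4) : face l - m⁻⁴, curve l = m⁻⁴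
    rw [faceA, show SA.filter (fun e => ∀ e' ∈ SA, pairing (1, -4) e ≤ pairing (1, -4) e')
          = {((0 : ℤ), (1 : ℤ)), ((-4 : ℤ), (0 : ℤ))} from by decide,
        Finset.sum_pair (by decide)] at hA
    norm_num [cA] at hA
    have h2 : l = m ^ ((-4) : ℤ) := by rw [zpow_neg]; simp only [zpow_ofNat]; linear_combination hA
    exact face_endgame m l x hm p q (-4) (by omega) h2 hxval
  · -- β = (-1,4) : face l⁻¹ - m⁴, curve l = m⁻⁴
    rw [faceA, show SA.filter (fun e => ∀ e' ∈ SA, pairing (-1, 4) e ≤ pairing (-1, 4) e')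
          = {((0 : ℤ), (-1 : ℤ)), ((4 : ℤ), (0 : ℤ))} from by decide,
        Finset.sum_pair (by decide)] at hA
    norm_num [cA] at hA
    have h2 : l⁻¹ = (m ^ ((-4) : ℤ))⁻¹ := by rw [zpow_neg, inv_inv]; simp only [zpow_ofNat]; linear_combination hA
    exact face_endgame m l x hm p q (-4) (by omega) (inv_injective h2) hxval
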